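/- Let the marginal distributions be uniform, F_i = U[a_i, b_i] with 0 ≤ a_i ≤ b_i and b_i > 0 for i = 1,...,n, so that the median of F_i is μ_i = (a_i + b_i)/2. Let μ_max = max_i μ_i and let i be an item attaining this maximum. Then the single pricing p that sets p_i = μ_max for item i and p_j = ∞ for all j ≠ i is 4-max-min optimal: R(p) ≥ R*/4. -/

import Mathlib

open MeasureTheory
open scoped ENNReal NNReal

noncomputable section

/-- A buyer's purchase rule for `n` items: given a valuation profile and a vector of item prices
(in `[0,∞]`), `choose` returns the purchased item (or `none` if nothing is purchased).
The axioms say: a purchased item has a finite price and yields nonnegative utility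
(`feasible`), the purchased item maximizes utility among all items (`optimal`), and the buyer
does purchase whenever some item yields nonnegative utility (`active`). Ties among
utility-maximizing items are broken according to the (fixed) rule embodied by `choose`. -/
structure BuyerRule (n : ℕ) where
  choose : (Fin n → ℝ) → (Fin n → ℝ≥0∞) → Option (Fin n)
  feasible : ∀ v p j, choose v p = some j → p j ≠ ⊤ ∧ (p j).toReal ≤ v j
  optimal : ∀ v p j k, choose v p = some j → p k ≠ ⊤ →
      v k - (p k).toReal ≤ v j - (p j).toReal
  active : ∀ v p, (∃ k, p k ≠ ⊤ ∧ (p k).toReal ≤ v k) → (choose v p).isSome = true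

/-- The seller's revenue from valuation profile `v` under pricing `p`. -/
def BuyerRule.revenue {n : ℕ} (B : BuyerRule n) (p : Fin n → ℝ≥0∞) (v : Fin n → ℝ) : ℝ≥0∞ :=
  (B.choose v p).elim 0 (fun j => p j)

/-- A joint distribution `F` on valuation profiles is compatible with the marginals `marg`
if it is a probability measure whose `j`-th one-dimensional marginal is `marg j` for every `j`. -/
def Compatible {n : ℕ} (marg : Fin n → Measure ℝ) (F : Measure (Fin n → ℝ)) : Prop :=
  IsProbabilityMeasure F ∧ ∀ j, F.map (fun v => v j) = marg j

/-- `R(p,F)`: the expected revenue of pricing `p` under joint distribution `F`. -/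
def expRev {n : ℕ} (B : BuyerRule n) (p : Fin n → ℝ≥0∞) (F : Measure (Fin n → ℝ)) : ℝ≥0∞ :=
  ∫⁻ v, B.revenue p v ∂F

/-- `R(p)`: the robust revenue guarantee of `p`, the infimum of `R(p,F)` over compatible `F`. -/
def robustRev {n : ℕ} (B : BuyerRule n) (marg : Fin n → Measure ℝ) (p : Fin n → ℝ≥0∞) : ℝ≥0∞ :=
  ⨅ (F : Measure (Fin n → ℝ)) (_ : Compatible marg F), expRev B p F

/-- `R*`: the optimal robust revenue guarantee over all pricings. -/
def optRobust {n : ℕ} (B : BuyerRule n) (marg : Fin n → Measure ℝ) : ℝ≥0∞ :=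
  ⨆ p : Fin n → ℝ≥0∞, robustRev B marg p

/-- The uniform distribution on `[a,b]`. -/
def unif (a b : ℝ) : Measure ℝ :=
  (ENNReal.ofReal (b - a))⁻¹ • volume.restrict (Set.Icc a b)

lemma unif_Ici_half {a b : ℝ} (h : a < b) : unif a b (Set.Ici ((a + b) / 2)) = 2⁻¹ := by
  have hd : (0:ℝ) < b - a := by linarith
  have hinter : Set.Ici ((a + b) / 2) ∩ Set.Icc a b = Set.Icc ((a + b) / 2) b := by
    ext x
    simp only [Set.mem_inter_iff, Set.mem_Ici, Set.mem_Icc]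
    constructor
    · rintro ⟨h1, _, h3⟩; exact ⟨h1, h3⟩
    · rintro ⟨h1, h2⟩; exact ⟨h1, by linarith, h2⟩
  simp only [unif, Measure.smul_apply, smul_eq_mul,
    Measure.restrict_apply measurableSet_Ici, hinter, Real.volume_Icc]
  have h1 : b - (a + b) / 2 = (b - a) * (1 / 2) := by ring
  rw [h1, ENNReal.ofReal_mul hd.le]
  have h2 : ENNReal.ofReal (1 / 2) = 2⁻¹ := by
    rw [show (1:ℝ)/2 = 2⁻¹ by norm_num, ENNReal.ofReal_inv_of_pos (by norm_num)]
    norm_num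
  rw [h2, ← mul_assoc, ENNReal.inv_mul_cancel (by positivity) ENNReal.ofReal_ne_top, one_mul]

/-- Let the marginals be uniform, `F_j = U[a_j, b_j]` with
`0 ≤ a_j ≤ b_j` and `b_j > 0`, so the median of `F_j` is `μ_j = (a_j + b_j)/2`. Let item `i`
attain the maximal median `μ_max = max_j μ_j`. Then the single pricing `p` with `p i = μ_max`
and `p j = ∞` for `j ≠ i` is `4`-max-min optimal: `R* ≤ 4 · R(p)`. -/
theorem uniform_marginals_max_median_single_price_is_four_max_min_optimal
    (n : ℕ) (B : BuyerRule n)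
    (a b : Fin n → ℝ) (hab : ∀ j, 0 ≤ a j ∧ a j ≤ b j) (hb : ∀ j, 0 < b j)
    (marg : Fin n → Measure ℝ) (hmarg : ∀ j, marg j = unif (a j) (b j))
    (i : Fin n) (hmax : ∀ j : Fin n, (a j + b j) / 2 ≤ (a i + b i) / 2)
    (p : Fin n → ℝ≥0∞)
    (hpi : p i = ENNReal.ofReal ((a i + b i) / 2))
    (hpj : ∀ j : Fin n, j ≠ i → p j = ⊤) :
    optRobust B marg ≤ 4 * robustRev B marg p := by
  set μ : ℝ := (a i + b i) / 2 with hμdef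
  have hμpos : 0 < μ := by
    have := (hab i).1; have := hb i
    simp only [hμdef]; linarith
  -- Upper bound: any pricing's expected revenue under any compatible F is ≤ a i + b i.
  have upper : ∀ (q : Fin n → ℝ≥0∞) (F : Measure (Fin n → ℝ)), Compatible marg F →
      expRev B q F ≤ ENNReal.ofReal (a i + b i) := by
    intro q F hF
    have hae : ∀ᵐ v ∂F, ∀ j, v j ≤ b j := by
      rw [ae_all_iff]
      intro j
      have hset : {v : Fin n → ℝ | ¬ v j ≤ b j} = (fun v => v j) ⁻¹' Set.Ioi (b j) := by
        ext v; simp [not_le]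
      rw [ae_iff, hset, ← Measure.map_apply (measurable_pi_apply j) measurableSet_Ioi,
        hF.2 j, hmarg j]
      have hinter : Set.Ioi (b j) ∩ Set.Icc (a j) (b j) = ∅ := by
        ext x
        simp only [Set.mem_inter_iff, Set.mem_Ioi, Set.mem_Icc, Set.mem_empty_iff_false,
          iff_false, not_and]
        intro h1 _; intro h3; linarith
      simp [unif, Measure.restrict_apply measurableSet_Ioi, hinter]
    have hbound : ∀ᵐ v ∂F, B.revenue q v ≤ ENNReal.ofReal (a i + b i) := by
      filter_upwards [hae] with v hv
      unfold BuyerRule.revenue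
      cases hc : B.choose v q with
      | none => simp
      | some j =>
        simp only [Option.elim]
        obtain ⟨hne, hle⟩ := B.feasible v q j hc
        calc q j = ENNReal.ofReal ((q j).toReal) := (ENNReal.ofReal_toReal hne).symm
          _ ≤ ENNReal.ofReal (a i + b i) := by
              apply ENNReal.ofReal_le_ofReal
              have h1 := hv j
              have h2 := hmax j
              have h3 := (hab j).1
              linarith
    calc expRev B q F ≤ ∫⁻ _, ENNReal.ofReal (a i + b i) ∂F := lintegral_mono_ae hbound
      _ = ENNReal.ofReal (a i + b i) := by
          rw [lintegral_const, hF.1.measure_univ, mul_one]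
  -- Lower bound: the pricing p earns at least μ / 2 under any compatible F.
  have lower : ∀ (F : Measure (Fin n → ℝ)), Compatible marg F →
      ENNReal.ofReal μ * 2⁻¹ ≤ expRev B p F := by
    intro F hF
    obtain ⟨hprob, hm⟩ := hF
    -- a i < b i, otherwise the marginal is not a probability measure
    have hlt : a i < b i := by
      by_contra hcon
      have heq : a i = b i := le_antisymm (hab i).2 (not_lt.mp hcon)
      have h1 : (F.map (fun v => v i)) Set.univ = 1 := by
        rw [Measure.map_apply (measurable_pi_apply i) MeasurableSet.univ]
        exact hprob.measure_univ
      rw [hm i, hmarg i] at h1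
      have h0 : unif (a i) (b i) Set.univ = 0 := by
        simp [unif, Measure.restrict_apply MeasurableSet.univ, heq, Real.volume_Icc]
      rw [h0] at h1
      exact zero_ne_one h1
    have key : ∀ v : Fin n → ℝ, μ ≤ v i → B.revenue p v = ENNReal.ofReal μ := by
      intro v hv
      have hex : ∃ k, p k ≠ ⊤ ∧ (p k).toReal ≤ v k := by
        refine ⟨i, ?_, ?_⟩
        · rw [hpi]; exact ENNReal.ofReal_ne_top
        · rw [hpi, ENNReal.toReal_ofReal hμpos.le]; exact hv
      obtain ⟨j, hj⟩ := Option.isSome_iff_exists.mp (B.active v p hex)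
      have hji : j = i := by
        by_contra h
        exact (B.feasible v p j hj).1 (hpj j h)
      unfold BuyerRule.revenue
      rw [hj]
      simp only [Option.elim, hji, hpi]
    have hmono : ∀ v, Set.indicator {v : Fin n → ℝ | μ ≤ v i}
        (fun _ => ENNReal.ofReal μ) v ≤ B.revenue p v := by
      intro v
      by_cases h : μ ≤ v i
      · simp only [Set.indicator_apply, Set.mem_setOf_eq, if_pos h, key v h, le_refl]
      · simp only [Set.indicator_apply, Set.mem_setOf_eq, if_neg h]; exact zero_le
    have hset : {v : Fin n → ℝ | μ ≤ v i} = (fun v => v i) ⁻¹' Set.Ici μ := rfl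
    have hmeas : MeasurableSet {v : Fin n → ℝ | μ ≤ v i} := by
      rw [hset]; exact (measurable_pi_apply i) measurableSet_Ici
    have hFset : F {v : Fin n → ℝ | μ ≤ v i} = 2⁻¹ := by
      rw [hset, ← Measure.map_apply (measurable_pi_apply i) measurableSet_Ici,
        hm i, hmarg i]
      exact unif_Ici_half hlt
    calc ENNReal.ofReal μ * 2⁻¹
        = ∫⁻ v, Set.indicator {v : Fin n → ℝ | μ ≤ v i}
            (fun _ => ENNReal.ofReal μ) v ∂F := by
          rw [lintegral_indicator hmeas, setLIntegral_const, hFset]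
      _ ≤ expRev B p F := lintegral_mono hmono
  by_cases hex : ∃ F, Compatible marg F
  · obtain ⟨F₀, hF₀⟩ := hex
    have h1 : optRobust B marg ≤ ENNReal.ofReal (a i + b i) := by
      apply iSup_le
      intro q
      exact le_trans (iInf₂_le F₀ hF₀) (upper q F₀ hF₀)
    have h2 : ENNReal.ofReal μ * 2⁻¹ ≤ robustRev B marg p := le_iInf₂ lower
    have heq : ENNReal.ofReal (a i + b i) = 4 * (ENNReal.ofReal μ * 2⁻¹) := by
      have h3 : a i + b i = 2 * μ := by simp [hμdef]; ring
      rw [h3, ENNReal.ofReal_mul (by norm_num)]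
      have h4 : ENNReal.ofReal 2 = 2 := by norm_num
      rw [h4]
      rw [show (4:ℝ≥0∞) = 2 * 2 by norm_num]
      rw [mul_assoc, mul_comm (ENNReal.ofReal μ) 2⁻¹, ← mul_assoc 2 2⁻¹,
        ENNReal.mul_inv_cancel two_ne_zero ENNReal.ofNat_ne_top, one_mul]
    calc optRobust B marg ≤ ENNReal.ofReal (a i + b i) := h1
      _ = 4 * (ENNReal.ofReal μ * 2⁻¹) := heq
      _ ≤ 4 * robustRev B marg p := by
          exact mul_le_mul_right h2 4
  · have htop : robustRev B marg p = ⊤ := by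
      refine le_antisymm le_top ?_
      refine le_iInf fun F => le_iInf fun hF => ?_
      exact absurd ⟨F, hF⟩ hex
    rw [htop, ENNReal.mul_top (by norm_num)]
    exact le_top
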